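/- For each irrational real number ξ: if v̂_{b,A}(ξ) = η then v_{b,A}(ξ) = +∞, and if v̂_{b,A}(ξ) < η then v_{b,A}(ξ) ≥ v̂_{b,A}(ξ) / (η − v̂_{b,A}(ξ)). -/

import Mathlib

open Filter MeasureTheory Set

/-- Distance to the nearest integer. -/
noncomputable def dni (x : ℝ) : ℝ := |x - round x|

/-- Asymptotic approximation exponent `v_{b,A}(ξ)` (valued in `EReal`). -/
noncomputable def vbA (b : ℕ) (a : ℕ → ℕ) (ξ : ℝ) : EReal :=
  sSup ((fun v : ℝ => (v : EReal)) ''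
    {v : ℝ | 0 ≤ v ∧ ∃ᶠ n in atTop, 1 ≤ n ∧
      dni ((b : ℝ) ^ (a n) * ξ) < (b : ℝ) ^ (-(a n : ℝ) * v)})

/-- Uniform approximation exponent `v̂_{b,A}(ξ)` (valued in `EReal`). -/
noncomputable def vhatbA (b : ℕ) (a : ℕ → ℕ) (ξ : ℝ) : EReal :=
  sSup ((fun v : ℝ => (v : EReal)) ''
    {v : ℝ | 0 ≤ v ∧ ∀ᶠ N in atTop, ∃ n, 1 ≤ n ∧ n ≤ N ∧
      dni ((b : ℝ) ^ (a n) * ξ) < (b : ℝ) ^ (-(a N : ℝ) * v)})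

lemma dni_nonneg (x : ℝ) : 0 ≤ dni x := abs_nonneg _

lemma dni_le_half (x : ℝ) : dni x ≤ 1 / 2 := abs_sub_round x

lemma dni_pos {x : ℝ} (hx : Irrational x) : 0 < dni x := by
  rw [dni, abs_pos, sub_ne_zero]
  exact hx.ne_int (round x)

lemma irr_pow_mul {b : ℕ} (hb : 2 ≤ b) (k : ℕ) {ξ : ℝ} (hξ : Irrational ξ) :
    Irrational ((b : ℝ) ^ k * ξ) := by
  have : ((b ^ k : ℕ) : ℝ) = (b : ℝ) ^ k := by push_cast; ring
  rw [← this]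
  exact hξ.natCast_mul (by positivity)

/-- local abbreviation for the quantities `‖b^{a_n} ξ‖`. -/
noncomputable def dd (b : ℕ) (a : ℕ → ℕ) (ξ : ℝ) (n : ℕ) : ℝ := dni ((b : ℝ) ^ (a n) * ξ)

lemma dd_pos {b : ℕ} (hb : 2 ≤ b) (a : ℕ → ℕ) {ξ : ℝ} (hξ : Irrational ξ) (n : ℕ) :
    0 < dd b a ξ n := dni_pos (irr_pow_mul hb _ hξ)

lemma gap {b : ℕ} (hb : 2 ≤ b) {ξ : ℝ} {j k : ℕ} (hjk : j < k)
    (hlt : dni ((b : ℝ) ^ k * ξ) < dni ((b : ℝ) ^ j * ξ)) :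
    1 ≤ 2 * (b : ℝ) ^ (k - j) * dni ((b : ℝ) ^ j * ξ) := by
  set x := (b : ℝ) ^ j * ξ with hx
  set y := (b : ℝ) ^ k * ξ with hy
  set p := round x with hp
  set q := round y with hqdef
  set D := (b : ℝ) ^ (k - j) with hDdef
  have hdx : dni x = |x - (p : ℝ)| := rfl
  have hdy : dni y = |y - (q : ℝ)| := rfl
  have hbig : D * x = y := by
    rw [hDdef, hx, hy, ← mul_assoc, ← pow_add]
    congr 2
    omega
  have hD1 : (1 : ℝ) ≤ D := one_le_pow₀ (by exact_mod_cast Nat.one_le_of_lt hb)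
  by_cases hq : q = (b : ℤ) ^ (k - j) * p
  · exfalso
    have heq : dni y = D * dni x := by
      rw [hdx, hdy, hq]
      push_cast [hDdef]
      rw [← hbig, ← mul_sub, abs_mul, abs_of_nonneg (by positivity)]
    nlinarith [dni_nonneg x, dni_nonneg y]
  · have hne : q - (b : ℤ) ^ (k - j) * p ≠ 0 := sub_ne_zero.mpr hq
    have h1 : (1 : ℝ) ≤ |((q - (b : ℤ) ^ (k - j) * p : ℤ) : ℝ)| := by
      exact_mod_cast Int.one_le_abs hne
    have h2 : |((q - (b : ℤ) ^ (k - j) * p : ℤ) : ℝ)| ≤ dni y + D * dni x := by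
      have hrw : ((q - (b : ℤ) ^ (k - j) * p : ℤ) : ℝ) = -(y - q) + D * (x - p) := by
        push_cast [hDdef]
        rw [← hbig]
        ring
      rw [hrw]
      refine (abs_add_le _ _).trans ?_
      rw [abs_neg, abs_mul, abs_of_nonneg (le_trans zero_le_one hD1), hdx, hdy]
    nlinarith [dni_nonneg x]

lemma key (b : ℕ) (hb : 2 ≤ b) (a : ℕ → ℕ) (ha : StrictMono a) (hpos : ∀ n, 1 ≤ a n)
    (η : ℝ)
    (hbdd : BddAbove (Set.range fun n => (a (n + 1) : ℝ) / (a n : ℝ)))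
    (hη : Filter.limsup (fun n => (a (n + 1) : ℝ) / (a n : ℝ)) atTop = η)
    (ξ : ℝ) (hξ : Irrational ξ)
    (w ε v : ℝ) (hw : 0 < w) (hwη : w < η) (hε : 0 < ε) (hv : 0 ≤ v)
    (hvw : v < w / (η + ε - w))
    (hwhat : (w : EReal) < vhatbA b a ξ) :
    (v : EReal) ≤ vbA b a ξ := by
  classical
  have hβ : (1 : ℝ) < (b : ℝ) := by exact_mod_cast (by omega : 1 < b)
  have hβ0 : (0 : ℝ) < (b : ℝ) := lt_trans one_pos hβ
  have hδpos : ∀ n, 0 < dd b a ξ n := dd_pos hb a hξ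
  -- uniform property with exponent w
  have hunif : ∀ᶠ N in atTop, ∃ n, 1 ≤ n ∧ n ≤ N ∧
      dd b a ξ n < (b : ℝ) ^ (-(a N : ℝ) * w) := by
    obtain ⟨x, hxmem, hwx⟩ := lt_sSup_iff.mp hwhat
    obtain ⟨v', hv'S, rfl⟩ := hxmem
    obtain ⟨hv'0, hv'unif⟩ := hv'S
    have hwx' : (w : EReal) < (v' : EReal) := hwx
    have hwv' : w ≤ v' := le_of_lt (by exact_mod_cast hwx')
    filter_upwards [hv'unif] with N hN
    obtain ⟨n, h1, h2, h3⟩ := hN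
    refine ⟨n, h1, h2, lt_of_lt_of_le h3 ?_⟩
    apply (Real.rpow_le_rpow_left_iff hβ).mpr
    have hc : (0:ℝ) ≤ (a N : ℝ) := Nat.cast_nonneg _
    nlinarith
  -- ratio property
  have hratio : ∀ᶠ N in atTop, (a (N+1) : ℝ) < (η + ε) * (a N : ℝ) := by
    have hlim : limsup (fun n => (a (n + 1) : ℝ) / (a n : ℝ)) atTop < η + ε := by
      rw [hη]; linarith
    have hbound : IsBoundedUnder (· ≤ ·) atTop (fun n => (a (n + 1) : ℝ) / (a n : ℝ)) := by
      obtain ⟨C, hC⟩ := hbdd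
      exact isBoundedUnder_of ⟨C, fun n => hC ⟨n, rfl⟩⟩
    filter_upwards [eventually_lt_of_limsup_lt hlim hbound] with N hN
    have hA : (0:ℝ) < (a N : ℝ) := by exact_mod_cast hpos N
    calc (a (N+1):ℝ) = ((a (N+1):ℝ)/(a N)) * (a N : ℝ) := by field_simp
    _ < (η+ε) * (a N : ℝ) := mul_lt_mul_of_pos_right hN hA
  obtain ⟨K, hK⟩ := eventually_atTop.mp (hunif.and hratio)
  have hden : (0:ℝ) < η + ε - w := by linarith
  set W := w / (η + ε - w) with hW
  have hWpos : 0 < W := div_pos hw hden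
  have hWv : 0 < W - v := by linarith
  have han : ∀ n : ℕ, (n : ℝ) ≤ (a n : ℝ) := fun n => by exact_mod_cast ha.le_apply
  -- finding N with β^(-(a N) w) < c
  have hfind : ∀ c : ℝ, 0 < c → ∃ N, K ≤ N ∧ (b:ℝ) ^ (-(a N : ℝ) * w) < c := by
    intro c hc
    refine ⟨max K (⌈(-Real.logb b c)/w⌉₊ + 1), le_max_left _ _, ?_⟩
    set N := max K (⌈(-Real.logb b c)/w⌉₊ + 1) with hN
    have h1 : (-Real.logb b c)/w < (N:ℝ) := by
      have h1a : (⌈(-Real.logb b c)/w⌉₊ + 1 : ℕ) ≤ N := le_max_right K _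
      have h1b : ((⌈(-Real.logb b c)/w⌉₊ + 1 : ℕ) : ℝ) ≤ (N : ℝ) := by exact_mod_cast h1a
      push_cast at h1b
      linarith [Nat.le_ceil ((-Real.logb b c)/w)]
    have h2 : -Real.logb b c < (a N : ℝ) * w := by
      rw [div_lt_iff₀ hw] at h1
      have := mul_le_mul_of_nonneg_right (han N) hw.le
      linarith
    calc (b:ℝ) ^ (-(a N:ℝ)*w) < (b:ℝ) ^ (Real.logb b c) := by
          apply (Real.rpow_lt_rpow_left_iff hβ).mpr; linarith
    _ = c := Real.rpow_logb hβ0 (ne_of_gt hβ) hc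
  -- the frequent statement
  refine le_sSup ⟨v, ⟨hv, ?_⟩, rfl⟩
  rw [frequently_atTop]
  intro M
  set M' := max M ⌈W/(W-v)⌉₊ with hM'
  obtain ⟨m₀, hm₀mem, hm₀min⟩ :=
    Finset.exists_min_image (Finset.Icc 0 M') (dd b a ξ) ⟨0, by simp⟩
  obtain ⟨N₀, hN₀K, hN₀c⟩ := hfind (dd b a ξ m₀) (hδpos m₀)
  obtain ⟨n₀, hn₀1, hn₀N₀, hn₀δ⟩ := (hK N₀ hN₀K).1
  obtain ⟨n, hnmem, hnmin⟩ := Finset.exists_min_image (Finset.Icc 1 N₀) (dd b a ξ)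
    ⟨n₀, Finset.mem_Icc.mpr ⟨hn₀1, hn₀N₀⟩⟩
  obtain ⟨hn1, hnN₀⟩ := Finset.mem_Icc.mp hnmem
  have hδn_lt : dd b a ξ n < (b:ℝ) ^ (-(a N₀:ℝ)*w) :=
    lt_of_le_of_lt (hnmin n₀ (Finset.mem_Icc.mpr ⟨hn₀1, hn₀N₀⟩)) hn₀δ
  have hδn_c : dd b a ξ n < dd b a ξ m₀ := hδn_lt.trans hN₀c
  have hnM' : M' < n := by
    by_contra h
    push_neg at h
    exact absurd (hm₀min n (Finset.mem_Icc.mpr ⟨Nat.zero_le _, h⟩)) (not_le.mpr hδn_c)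
  -- next record index
  have hPex : ∃ N, ∃ m, 1 ≤ m ∧ m ≤ N ∧ dd b a ξ m < dd b a ξ n := by
    obtain ⟨N₂, hN₂K, hN₂⟩ := hfind (dd b a ξ n) (hδpos n)
    obtain ⟨m, h1, h2, h3⟩ := (hK N₂ hN₂K).1
    exact ⟨N₂, m, h1, h2, h3.trans hN₂⟩
  obtain ⟨N₁, hspec, hmin⟩ :
      ∃ N, (∃ m, 1 ≤ m ∧ m ≤ N ∧ dd b a ξ m < dd b a ξ n) ∧
        ∀ N' < N, ¬ ∃ m, 1 ≤ m ∧ m ≤ N' ∧ dd b a ξ m < dd b a ξ n :=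
    ⟨Nat.find hPex, Nat.find_spec hPex, fun N h => Nat.find_min hPex h⟩
  obtain ⟨m₁, hm₁1, hm₁N₁, hm₁δ⟩ := hspec
  have hN₀N₁ : N₀ < N₁ := by
    by_contra h
    push_neg at h
    have : dd b a ξ n ≤ dd b a ξ m₁ :=
      hnmin m₁ (Finset.mem_Icc.mpr ⟨hm₁1, hm₁N₁.trans h⟩)
    exact absurd hm₁δ (not_lt.mpr this)
  have hN₁1 : 1 ≤ N₁ := by omega
  have hm₁eq : m₁ = N₁ := by
    by_contra h
    exact hmin (N₁-1) (by omega) ⟨m₁, hm₁1, by omega, hm₁δ⟩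
  have hδN₁ : dd b a ξ N₁ < dd b a ξ n := hm₁eq ▸ hm₁δ
  have hKle : K ≤ N₁ - 1 := by omega
  obtain ⟨m', hm'1, hm'le, hm'δ⟩ := (hK (N₁-1) hKle).1
  have hδnm' : dd b a ξ n ≤ dd b a ξ m' := by
    by_contra h
    push_neg at h
    exact hmin (N₁-1) (by omega) ⟨m', hm'1, hm'le, h⟩
  have hmain1 : dd b a ξ n < (b:ℝ) ^ (-(a (N₁-1) : ℝ) * w) := lt_of_le_of_lt hδnm' hm'δ
  have hmain2 : (a N₁ : ℝ) < (η+ε) * (a (N₁-1) : ℝ) := by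
    have h := (hK (N₁-1) hKle).2
    rwa [Nat.sub_add_cancel hN₁1] at h
  have hnN₁ : n < N₁ := by omega
  have haa : a n < a N₁ := ha hnN₁
  have hgap : 1 ≤ 2 * (b : ℝ) ^ (a N₁ - a n) * dd b a ξ n := gap hb haa hδN₁
  -- logarithmic bounds
  set L := Real.logb b (dd b a ξ n) with hLdef
  have hL1 : L < -(a (N₁-1):ℝ) * w := (Real.logb_lt_iff_lt_rpow hβ (hδpos n)).mpr hmain1
  have hΔcast : ((a N₁ - a n : ℕ) : ℝ) = (a N₁ : ℝ) - (a n : ℝ) := by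
    exact_mod_cast Nat.cast_sub (le_of_lt haa)
  have hlow : (b:ℝ) ^ (-(((a N₁ - a n : ℕ)) : ℝ) - 1) ≤ dd b a ξ n := by
    have hpow : (b:ℝ) ^ (-(((a N₁ - a n : ℕ)) : ℝ) - 1) =
        ((b:ℝ) ^ ((a N₁ - a n) + 1 : ℕ))⁻¹ := by
      rw [← Real.rpow_natCast (b:ℝ) ((a N₁ - a n) + 1), ← Real.rpow_neg (le_of_lt hβ0)]
      congr 1
      push_cast
      ring
    rw [hpow]
    rw [inv_le_iff_one_le_mul₀ (by positivity)]
    have hb2 : (2:ℝ) ≤ (b:ℝ) := by exact_mod_cast hb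
    have hppos := pow_pos hβ0 (a N₁ - a n)
    have h2b : 2 * (b : ℝ) ^ (a N₁ - a n) ≤ (b:ℝ) ^ ((a N₁ - a n) + 1) := by
      rw [pow_succ]
      have := mul_le_mul_of_nonneg_left hb2 hppos.le
      linarith
    have h2c : 2 * (b : ℝ) ^ (a N₁ - a n) * dd b a ξ n ≤
        (b:ℝ) ^ ((a N₁ - a n) + 1) * dd b a ξ n :=
      mul_le_mul_of_nonneg_right h2b (hδpos n).le
    linarith
  have hL2 : -(((a N₁ - a n : ℕ)) : ℝ) - 1 ≤ L :=
    (Real.le_logb_iff_rpow_le hβ (hδpos n)).mpr hlow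
  -- arithmetic
  have hA1'pos : (0:ℝ) < (a (N₁-1) : ℝ) := by exact_mod_cast hpos (N₁-1)
  have hA0pos : (1:ℝ) ≤ (a n : ℝ) := by exact_mod_cast hpos n
  have s1 : (a (N₁-1) : ℝ) * w < -L := by linarith
  have s3a : (a N₁:ℝ) * w < ((η+ε) * (a (N₁-1):ℝ)) * w := mul_lt_mul_of_pos_right hmain2 hw
  have s3b : (η+ε) * ((a (N₁-1):ℝ) * w) < (η+ε) * (-L) :=
    mul_lt_mul_of_pos_left s1 (by linarith)
  have s3 : (a N₁ : ℝ) * w < (η+ε) * (-L) := by linarith [s3a, s3b]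
  have s4 : -L ≤ (a N₁ : ℝ) - (a n : ℝ) + 1 := by rw [hΔcast] at hL2; linarith
  have s5a : ((a n : ℝ) - 1) * w ≤ ((a N₁:ℝ) + L) * w :=
    mul_le_mul_of_nonneg_right (by linarith) hw.le
  have s5 : ((a n : ℝ) - 1) * w < (η+ε-w) * (-L) := by linarith [s5a, s3]
  have s6 : ((a n : ℝ)-1) * w/(η+ε-w) < -L := (div_lt_iff₀ hden).mpr (by linarith [s5])
  have hA0 : W / (W - v) < (a n : ℝ) := by
    have hc1 : (⌈W/(W-v)⌉₊ + 1 : ℕ) ≤ n := by omega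
    have hc2 : ((⌈W/(W-v)⌉₊ + 1 : ℕ) : ℝ) ≤ (n : ℝ) := by exact_mod_cast hc1
    push_cast at hc2
    linarith [Nat.le_ceil (W/(W-v)), han n]
  have s7 : (a n : ℝ) * v < ((a n : ℝ) - 1) * W := by
    have h7 := (div_lt_iff₀ hWv).mp hA0
    linarith [h7]
  have hfin : (a n : ℝ) * v < -L := by
    have h8 : ((a n : ℝ)-1) * W = ((a n : ℝ)-1) * w/(η+ε-w) := by rw [hW]; ring
    rw [h8] at s7
    linarith
  refine ⟨n, by omega, by omega, ?_⟩
  have : L < -(a n : ℝ) * v := by linarith [hfin]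
  exact (Real.logb_lt_iff_lt_rpow hβ (hδpos n)).mp this

lemma vbA_nonneg (b : ℕ) (hb : 2 ≤ b) (a : ℕ → ℕ) (ξ : ℝ) : (0 : EReal) ≤ vbA b a ξ := by
  have h0 : ((0:ℝ) : EReal) ≤ vbA b a ξ := by
    refine le_sSup ⟨0, ⟨le_refl 0, ?_⟩, rfl⟩
    rw [frequently_atTop]
    intro N
    refine ⟨max N 1, le_max_left _ _, le_max_right _ _, ?_⟩
    have : -((a (max N 1) : ℝ)) * 0 = 0 := by ring
    rw [this, Real.rpow_zero]
    calc dni _ ≤ 1/2 := dni_le_half _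
    _ < 1 := by norm_num
  exact_mod_cast h0

lemma vhat_nonneg (b : ℕ) (hb : 2 ≤ b) (a : ℕ → ℕ) (ξ : ℝ) : (0 : EReal) ≤ vhatbA b a ξ := by
  have h0 : ((0:ℝ) : EReal) ≤ vhatbA b a ξ := by
    refine le_sSup ⟨0, ⟨le_refl 0, ?_⟩, rfl⟩
    rw [eventually_atTop]
    refine ⟨1, fun N hN => ⟨1, le_refl 1, hN, ?_⟩⟩
    have : -((a N : ℝ)) * 0 = 0 := by ring
    rw [this, Real.rpow_zero]
    calc dni _ ≤ 1/2 := dni_le_half _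
    _ < 1 := by norm_num
  exact_mod_cast h0

lemma one_le_eta (a : ℕ → ℕ) (ha : StrictMono a) (hpos : ∀ n, 1 ≤ a n) (η : ℝ)
    (hbdd : BddAbove (Set.range fun n => (a (n + 1) : ℝ) / (a n : ℝ)))
    (hη : Filter.limsup (fun n => (a (n + 1) : ℝ) / (a n : ℝ)) atTop = η) : 1 ≤ η := by
  rw [← hη]
  have hbound : IsBoundedUnder (· ≤ ·) atTop (fun n => (a (n + 1) : ℝ) / (a n : ℝ)) := by
    obtain ⟨C, hC⟩ := hbdd
    exact isBoundedUnder_of ⟨C, fun n => hC ⟨n, rfl⟩⟩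
  refine le_limsup_of_frequently_le (Eventually.frequently (Eventually.of_forall fun n => ?_))
    hbound
  have h1 : (0:ℝ) < (a n : ℝ) := by exact_mod_cast hpos n
  have h2 : (a n : ℝ) ≤ (a (n+1) : ℝ) := by exact_mod_cast (ha (Nat.lt_succ_self n)).le
  rw [le_div_iff₀ h1]
  linarith

theorem stmt3 (b : ℕ) (hb : 2 ≤ b) (a : ℕ → ℕ) (ha : StrictMono a)
    (hpos : ∀ n, 1 ≤ a n) (η : ℝ)
    (hbdd : BddAbove (Set.range fun n => (a (n + 1) : ℝ) / (a n : ℝ)))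
    (hη : Filter.limsup (fun n => (a (n + 1) : ℝ) / (a n : ℝ)) atTop = η)
    (ξ : ℝ) (hξ : Irrational ξ) :
    (vhatbA b a ξ = (η : EReal) → vbA b a ξ = ⊤) ∧
    (vhatbA b a ξ < (η : EReal) →
      (((vhatbA b a ξ).toReal / (η - (vhatbA b a ξ).toReal) : ℝ) : EReal) ≤ vbA b a ξ) := by
  have hη1 : 1 ≤ η := one_le_eta a ha hpos η hbdd hη
  constructor
  · intro hcase
    rw [EReal.eq_top_iff_forall_lt]
    intro T
    set T' := max T 0 with hT'
    have hT'0 : 0 ≤ T' := le_max_right _ _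
    have hTT' : T ≤ T' := le_max_left _ _
    set d := min (η/2) (η/(4*(T'+2))) with hd
    have hd0 : 0 < d := lt_min (by linarith) (by positivity)
    have hd1 : d ≤ η/2 := min_le_left _ _
    have hd2 : d ≤ η/(4*(T'+2)) := min_le_right _ _
    have hd2' : d * (4*(T'+2)) ≤ η := by
      rw [← le_div_iff₀ (by positivity)]
      exact hd2
    have hvw : T' + 1 < (η - d) / (η + d - (η - d)) := by
      have hden : η + d - (η - d) = 2*d := by ring
      rw [hden, lt_div_iff₀ (by linarith)]
      nlinarith
    have hle : ((T' + 1 : ℝ) : EReal) ≤ vbA b a ξ := by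
      apply key b hb a ha hpos η hbdd hη ξ hξ (η - d) d (T'+1) (by linarith) (by linarith)
        hd0 (by linarith) hvw
      rw [hcase]
      exact_mod_cast (by linarith : η - d < η)
    refine lt_of_lt_of_le ?_ hle
    exact_mod_cast (by linarith : T < T' + 1)
  · intro hcase
    have h0 : (0:EReal) ≤ vhatbA b a ξ := vhat_nonneg b hb a ξ
    have hne_top : vhatbA b a ξ ≠ ⊤ := (hcase.trans_le le_top).ne
    have hne_bot : vhatbA b a ξ ≠ ⊥ := fun h => by simp [h] at h0
    set u := (vhatbA b a ξ).toReal with hudef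
    have hu : vhatbA b a ξ = (u : EReal) := (EReal.coe_toReal hne_top hne_bot).symm
    have hu0 : 0 ≤ u := by
      rw [hu] at h0; exact_mod_cast h0
    have huη : u < η := by
      rw [hu] at hcase; exact_mod_cast hcase
    have hηu : 0 < η - u := by linarith
    rcases eq_or_lt_of_le hu0 with h | hupos
    · rw [← h, zero_div]
      exact_mod_cast vbA_nonneg b hb a ξ
    · by_contra hcon
      push_neg at hcon
      have hvb0 : (0:EReal) ≤ vbA b a ξ := vbA_nonneg b hb a ξ
      have hvbne_top : vbA b a ξ ≠ ⊤ := (hcon.trans_le le_top).ne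
      have hvbne_bot : vbA b a ξ ≠ ⊥ := fun h => by simp [h] at hvb0
      set r := (vbA b a ξ).toReal with hrdef
      have hr : vbA b a ξ = (r : EReal) := (EReal.coe_toReal hvbne_top hvbne_bot).symm
      have hru : r < u/(η-u) := by
        rw [hr] at hcon; exact_mod_cast hcon
      have hr0 : 0 ≤ r := by
        rw [hr] at hvb0; exact_mod_cast hvb0
      set v := (r + u/(η-u))/2 with hv
      have hv0 : 0 ≤ v := by
        have : 0 < u/(η-u) := by positivity
        rw [hv]; linarith
      have hvlt : v < u/(η-u) := by rw [hv]; linarith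
      have hrv : r < v := by rw [hv]; linarith
      set d := min (u/2) ((η-u)*(u/(η-u) - v)/(2*(1+2*v))) with hd
      have hc0 : 0 < u/(η-u) - v := by linarith
      have hd0 : 0 < d := lt_min (by linarith) (by positivity)
      have hdu : d < u := (min_le_left _ _).trans_lt (by linarith)
      have hkey : d * (2*(1+2*v)) ≤ (η-u)*(u/(η-u)-v) := by
        rw [← le_div_iff₀ (by positivity : (0:ℝ) < 2*(1+2*v))]
        exact min_le_right _ _
      have hid : (η-u)*(u/(η-u)-v) = u - (η-u)*v := by
        field_simp
      rw [hid] at hkey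
      have hvw : v < (u - d) / (η + d - (u - d)) := by
        have hden2 : η + d - (u - d) = η - u + 2*d := by ring
        rw [hden2, lt_div_iff₀ (by linarith)]
        have hvd : 0 ≤ v * d := mul_nonneg hv0 hd0.le
        nlinarith
      have hle : ((v : ℝ) : EReal) ≤ vbA b a ξ := by
        apply key b hb a ha hpos η hbdd hη ξ hξ (u - d) d v (by linarith) (by linarith)
          hd0 hv0 hvw
        rw [hu]
        exact_mod_cast (by linarith : u - d < u)
      rw [hr] at hle
      have : v ≤ r := by exact_mod_cast hle
      linarith
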